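/- Let k ≥ 2. If there exists a quaternary Hermitian LCD [n,k,d₀] code with Hermitian dual distance at least 2, then there exists a quaternary Hermitian LCD [n+1,k,d] code with Hermitian dual distance at least 2 and d ∈ {d₀, d₀+1}. -/
import Mathlib


open Finset Matrix

/-- The Hermitian inner product `(x, y)_h = ∑ i, x i * (y i)^q` on `F^n`. -/
def hermInner {F : Type*} [Field F] (q : ℕ) {n : ℕ} (x y : Fin n → F) : F :=
  ∑ i, x i * (y i) ^ q

/-- The Hermitian dual code `C^{⊥h}`. -/
def hermDual {F : Type*} [Field F] (q : ℕ) {n : ℕ} (C : Submodule F (Fin n → F)) :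
    Submodule F (Fin n → F) where
  carrier := {x | ∀ y ∈ C, hermInner q x y = 0}
  add_mem' := by
    intro a b ha hb y hy
    have h1 := ha y hy
    have h2 := hb y hy
    simp only [hermInner] at *
    rw [show (∑ i, (a + b) i * y i ^ q)
        = (∑ i, a i * y i ^ q) + ∑ i, b i * y i ^ q by
      rw [← Finset.sum_add_distrib]
      exact Finset.sum_congr rfl fun i _ => by simp [add_mul]]
    rw [h1, h2, add_zero]
  zero_mem' := by
    intro y hy
    simp [hermInner]
  smul_mem' := by
    intro c a ha y hy
    have h1 := ha y hy
    simp only [hermInner] at *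
    rw [show (∑ i, (c • a) i * y i ^ q) = c * ∑ i, a i * y i ^ q by
      rw [Finset.mul_sum]
      exact Finset.sum_congr rfl fun i _ => by simp [mul_assoc]]
    rw [h1, mul_zero]

/-- A code is Hermitian LCD if `C ∩ C^{⊥h} = {0}`. -/
def IsHermLCD {F : Type*} [Field F] (q : ℕ) {n : ℕ} (C : Submodule F (Fin n → F)) : Prop :=
  C ⊓ hermDual q C = ⊥

/-- Hamming weight: number of nonzero coordinates. -/
noncomputable def wt {F : Type*} [Field F] {n : ℕ} (x : Fin n → F) : ℕ :=
  Nat.card {i // x i ≠ 0}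

/-- `C` has minimum weight `d`. -/
def minWt {F : Type*} [Field F] {n : ℕ} (C : Submodule F (Fin n → F)) (d : ℕ) : Prop :=
  (∃ c ∈ C, c ≠ 0 ∧ wt c = d) ∧ ∀ c ∈ C, c ≠ 0 → d ≤ wt c

/-- The Hermitian dual distance of `C` is at least 2. -/
def dualDistGeTwo {F : Type*} [Field F] (q : ℕ) {n : ℕ} (C : Submodule F (Fin n → F)) : Prop :=
  ∀ x ∈ hermDual q C, x ≠ 0 → 2 ≤ wt x

/-- The Hermitian dual distance of `C` equals 1, i.e. `C^{⊥h}` contains a weight-one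
vector. -/
def dualDistOne {F : Type*} [Field F] (q : ℕ) {n : ℕ} (C : Submodule F (Fin n → F)) : Prop :=
  ∃ x ∈ hermDual q C, wt x = 1

/- ## Auxiliary lemmas -/

section Aux

local notation "𝔽" => GaloisField 2 2

noncomputable instance : Fintype (GaloisField 2 2) := Fintype.ofFinite _

lemma F4_pow_four (a : 𝔽) : a ^ 4 = a := by
  have h := FiniteField.pow_card a
  rwa [show Fintype.card 𝔽 = 4 by simpa using GaloisField.card 2 2 (by norm_num)] at h

lemma F4_sq_fixed {a : 𝔽} (h : a ^ 2 = a) (h0 : a ≠ 0) : a = 1 := by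
  rcases mul_eq_zero.mp (show a * (a - 1) = 0 by linear_combination h) with h' | h'
  · exact absurd h' h0
  · exact sub_eq_zero.mp h'

variable {m : ℕ}

lemma mem_hermDual {F : Type*} [Field F] {q : ℕ} {C : Submodule F (Fin m → F)}
    {x : Fin m → F} : x ∈ hermDual q C ↔ ∀ y ∈ C, hermInner q x y = 0 := Iff.rfl

lemma hermInner_add_left {F : Type*} [Field F] {q : ℕ} (x x' y : Fin m → F) :
    hermInner q (x + x') y = hermInner q x y + hermInner q x' y := by
  simp [hermInner, add_mul, Finset.sum_add_distrib]

lemma hermInner_smul_left {F : Type*} [Field F] {q : ℕ} (a : F) (x y : Fin m → F) :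
    hermInner q (a • x) y = a * hermInner q x y := by
  simp [hermInner, Finset.mul_sum, mul_assoc]

lemma hermInner_swap (x y : Fin m → 𝔽) :
    hermInner 2 y x = (hermInner 2 x y) ^ 2 := by
  rw [hermInner, hermInner, CharTwo.sum_sq]
  refine Finset.sum_congr rfl fun i _ => ?_
  have h4 : ((y i) ^ 2) ^ 2 = y i := by
    rw [← pow_mul]; exact F4_pow_four (y i)
  rw [mul_pow, h4]; ring

lemma hermInner_add_right (x y y' : Fin m → 𝔽) :
    hermInner 2 x (y + y') = hermInner 2 x y + hermInner 2 x y' := by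
  simp only [hermInner, Pi.add_apply, ← Finset.sum_add_distrib]
  refine Finset.sum_congr rfl fun i _ => ?_
  rw [CharTwo.add_sq, mul_add]

open Classical in
lemma wt_eq_card {F : Type*} [Field F] (x : Fin m → F) :
    wt x = (Finset.univ.filter (fun i => x i ≠ 0)).card := by
  have h : Nat.card {i // x i ≠ 0} = Fintype.card {i // x i ≠ 0} := Nat.card_eq_fintype_card
  rw [wt, h, Fintype.card_subtype]

lemma one_le_wt {F : Type*} [Field F] {x : Fin m → F} (hx : x ≠ 0) : 1 ≤ wt x := by
  classical
  rw [wt_eq_card]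
  obtain ⟨i, hi⟩ := Function.ne_iff.mp hx
  exact Finset.card_pos.mpr ⟨i, Finset.mem_filter.mpr ⟨Finset.mem_univ i, by simpa using hi⟩⟩

lemma wt_snoc_zero {F : Type*} [Field F] (x : Fin m → F) :
    wt (Fin.snoc x (0 : F)) = wt x := by
  classical
  rw [wt_eq_card, wt_eq_card, Finset.card_filter, Finset.card_filter,
    Fin.sum_univ_castSucc]
  simp

lemma wt_snoc_ne {F : Type*} [Field F] (x : Fin m → F) {a : F} (ha : a ≠ 0) :
    wt (Fin.snoc x a) = wt x + 1 := by
  classical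
  rw [wt_eq_card, wt_eq_card, Finset.card_filter, Finset.card_filter,
    Fin.sum_univ_castSucc]
  simp [ha]

end Aux

/-- quaternary codes, i.e. codes over `GaloisField 2 2`, with conjugation
`x ↦ x ^ 2`. -/
theorem stmt_3 (n k d₀ : ℕ) (hk : 2 ≤ k)
    (h : ∃ C : Submodule (GaloisField 2 2) (Fin n → GaloisField 2 2),
      Module.finrank (GaloisField 2 2) C = k ∧ IsHermLCD 2 C ∧ minWt C d₀ ∧
      dualDistGeTwo 2 C) :
    ∃ C : Submodule (GaloisField 2 2) (Fin (n + 1) → GaloisField 2 2), ∃ d : ℕ,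
      Module.finrank (GaloisField 2 2) C = k ∧ IsHermLCD 2 C ∧ minWt C d ∧
      dualDistGeTwo 2 C ∧ (d = d₀ ∨ d = d₀ + 1) := by
  classical
  obtain ⟨C, hrank, hLCD, ⟨⟨c₀, hc₀C, hc₀ne, hc₀wt⟩, hminlb⟩, hdd⟩ := h
  -- Step 1: find a nonzero isotropic vector `v ∈ C`.
  have hCne : C ≠ ⊥ := by
    intro hbot
    rw [hbot, finrank_bot] at hrank
    omega
  obtain ⟨v₁, hv₁C, hv₁ne⟩ := Submodule.exists_mem_ne_zero_of_ne_bot hCne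
  have hiso : ∃ v ∈ C, v ≠ 0 ∧ hermInner 2 v v = 0 := by
    by_cases h1 : hermInner 2 v₁ v₁ = 0
    · exact ⟨v₁, hv₁C, hv₁ne, h1⟩
    · -- find `v₂ ∈ C` nonzero with `hermInner v₂ v₁ = 0`
      let ℓ : C →ₗ[(GaloisField 2 2)] (GaloisField 2 2) :=
        { toFun := fun c => hermInner 2 (c : Fin n → (GaloisField 2 2)) v₁
          map_add' := fun a b => by
            simpa using hermInner_add_left (a : Fin n → (GaloisField 2 2)) (b : Fin n → (GaloisField 2 2)) v₁
          map_smul' := fun a b => by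
            simpa using hermInner_smul_left a (b : Fin n → (GaloisField 2 2)) v₁ }
      have hker : LinearMap.ker ℓ ≠ ⊥ := by
        intro hkbot
        have h1 := LinearMap.finrank_range_add_finrank_ker ℓ
        rw [hkbot, finrank_bot, hrank, add_zero] at h1
        have h2 : Module.finrank (GaloisField 2 2) (LinearMap.range ℓ) ≤ Module.finrank (GaloisField 2 2) (GaloisField 2 2) :=
          Submodule.finrank_le _
        rw [Module.finrank_self] at h2
        omega
      obtain ⟨v₂', hv₂ker, hv₂ne'⟩ := Submodule.exists_mem_ne_zero_of_ne_bot hker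
      set v₂ := (v₂' : Fin n → (GaloisField 2 2)) with hv₂def
      have hv₂C : v₂ ∈ C := v₂'.2
      have hv₂ne : v₂ ≠ 0 := fun h0 => hv₂ne' (Subtype.ext h0)
      have h21 : hermInner 2 v₂ v₁ = 0 := LinearMap.mem_ker.mp hv₂ker
      have h12 : hermInner 2 v₁ v₂ = 0 := by
        rw [hermInner_swap v₂ v₁, h21]; ring
      by_cases h2 : hermInner 2 v₂ v₂ = 0
      · exact ⟨v₂, hv₂C, hv₂ne, h2⟩
      · refine ⟨v₁ + v₂, C.add_mem hv₁C hv₂C, ?_, ?_⟩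
        · intro hz
          have hv₂eq : v₂ = -v₁ := eq_neg_of_add_eq_zero_right hz
          apply h1
          have e : hermInner 2 (-v₁) v₁ = - hermInner 2 v₁ v₁ := by
            rw [← neg_one_smul (GaloisField 2 2) v₁, hermInner_smul_left]; ring
          rw [hv₂eq, e, neg_eq_zero] at h21
          exact h21
        · have e : hermInner 2 (v₁ + v₂) (v₁ + v₂)
              = hermInner 2 v₁ v₁ + hermInner 2 v₂ v₂ := by
            rw [hermInner_add_left, hermInner_add_right, hermInner_add_right, h12, h21]
            ring
          have ha : hermInner 2 v₁ v₁ = 1 :=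
            F4_sq_fixed (hermInner_swap v₁ v₁).symm h1
          have hb : hermInner 2 v₂ v₂ = 1 :=
            F4_sq_fixed (hermInner_swap v₂ v₂).symm h2
          rw [e, ha, hb]
          exact CharTwo.add_self_eq_zero 1
  obtain ⟨v, hvC, hvne, hviso⟩ := hiso
  -- Step 2: the extension map
  set ψ : (Fin n → (GaloisField 2 2)) → (GaloisField 2 2) := fun c => hermInner 2 c v with hψdef
  let T : (Fin n → (GaloisField 2 2)) →ₗ[(GaloisField 2 2)] (Fin (n + 1) → (GaloisField 2 2)) :=
    { toFun := fun c => Fin.snoc c (ψ c)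
      map_add' := fun a b => by
        funext i
        refine Fin.lastCases ?_ (fun j => ?_) i
        · simp [hψdef, hermInner_add_left]
        · simp
      map_smul' := fun a b => by
        funext i
        refine Fin.lastCases ?_ (fun j => ?_) i
        · simp [hψdef, hermInner_smul_left]
        · simp }
  have hTapp : ∀ c, T c = Fin.snoc c (ψ c) := fun c => rfl
  have hTinj : Function.Injective T := by
    intro a b hab
    have h := congrArg Fin.init hab
    rwa [hTapp, hTapp, Fin.init_snoc, Fin.init_snoc] at h
  set C' := Submodule.map T C with hC'def
  have hmemC' : ∀ y, y ∈ C' ↔ ∃ c ∈ C, T c = y := fun y => Submodule.mem_map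
  -- rank
  have hrank' : Module.finrank (GaloisField 2 2) C' = k := by
    rw [← hrank]
    exact ((Submodule.equivMapOfInjective T hTinj C).finrank_eq).symm
  -- key inner product computation
  have hkey : ∀ (x : Fin n → (GaloisField 2 2)) (a : (GaloisField 2 2)) (c : Fin n → (GaloisField 2 2)),
      hermInner 2 (Fin.snoc x a) (T c) = hermInner 2 (x + a • v) c := by
    intro x a c
    have h1 : hermInner 2 (Fin.snoc x a) (T c)
        = hermInner 2 x c + a * (ψ c) ^ 2 := by
      rw [hTapp]
      simp only [hermInner]
      rw [Fin.sum_univ_castSucc]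
      simp
    have h2 : (ψ c) ^ 2 = hermInner 2 v c := (hermInner_swap c v).symm
    rw [h1, h2, hermInner_add_left, hermInner_smul_left]
  have hdual' : ∀ (x : Fin n → (GaloisField 2 2)) (a : (GaloisField 2 2)),
      Fin.snoc x a ∈ hermDual 2 C' ↔ x + a • v ∈ hermDual 2 C := by
    intro x a
    constructor
    · intro hx c hc
      have := mem_hermDual.mp hx (T c) ((hmemC' _).mpr ⟨c, hc, rfl⟩)
      rwa [hkey] at this
    · intro hx y hy
      obtain ⟨c, hc, rfl⟩ := (hmemC' y).mp hy
      rw [hkey]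
      exact mem_hermDual.mp hx c hc
  -- LCD
  have hLCD' : IsHermLCD 2 C' := by
    rw [IsHermLCD, eq_bot_iff]
    intro y hy
    obtain ⟨hyC', hyD'⟩ := Submodule.mem_inf.mp hy
    obtain ⟨c, hc, rfl⟩ := (hmemC' y).mp hyC'
    rw [hTapp] at hyD'
    have hd : c + ψ c • v ∈ hermDual 2 C := (hdual' c (ψ c)).mp hyD'
    have h0 : ψ c = 0 := by
      have h := mem_hermDual.mp hd v hvC
      rwa [hermInner_add_left, hermInner_smul_left, hviso, mul_zero, add_zero] at h
    have hcD : c ∈ hermDual 2 C := by rwa [h0, zero_smul, add_zero] at hd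
    have hmem : c ∈ C ⊓ hermDual 2 C := ⟨hc, hcD⟩
    rw [hLCD] at hmem
    have hc0 : c = 0 := by simpa using hmem
    simp [hc0]
  -- dual distance
  have hdd' : dualDistGeTwo 2 C' := by
    intro y hyD hyne
    set x := Fin.init y with hxdef
    set a := y (Fin.last n) with hadef
    have hys : y = Fin.snoc x a := (Fin.snoc_init_self y).symm
    rw [hys] at hyD
    have hxa : x + a • v ∈ hermDual 2 C := (hdual' x a).mp hyD
    by_cases ha : a = 0
    · have hx : x ∈ hermDual 2 C := by rwa [ha, zero_smul, add_zero] at hxa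
      have hxne : x ≠ 0 := by
        intro h0
        apply hyne
        rw [hys, h0, ha]
        funext i
        refine Fin.lastCases ?_ (fun j => ?_) i <;> simp
      have h2 := hdd x hx hxne
      rw [hys, ha, wt_snoc_zero]
      exact h2
    · have hxne : x ≠ 0 := by
        intro h0
        rw [h0, zero_add] at hxa
        have hvD : v ∈ hermDual 2 C := by
          have h := (hermDual 2 C).smul_mem a⁻¹ hxa
          rwa [smul_smul, inv_mul_cancel₀ ha, one_smul] at h
        have hmem : v ∈ C ⊓ hermDual 2 C := ⟨hvC, hvD⟩
        rw [hLCD] at hmem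
        exact hvne (by simpa using hmem)
      have h1 : 1 ≤ wt x := one_le_wt hxne
      rw [hys, wt_snoc_ne _ ha]
      omega
  -- minimum weight
  by_cases hex : ∃ c ∈ C, c ≠ 0 ∧ wt c = d₀ ∧ hermInner 2 c v = 0
  · obtain ⟨c, hc, hcne, hcwt, hcψ⟩ := hex
    refine ⟨C', d₀, hrank', hLCD', ⟨⟨T c, (hmemC' _).mpr ⟨c, hc, rfl⟩, ?_, ?_⟩, ?_⟩,
      hdd', Or.inl rfl⟩
    · intro h0
      exact hcne (hTinj (by rw [h0, map_zero]))
    · rw [hTapp, show ψ c = 0 from hcψ, wt_snoc_zero, hcwt]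
    · intro c' hc' hc'ne
      obtain ⟨c₁, hc₁C, rfl⟩ := (hmemC' c').mp hc'
      have hc₁ne : c₁ ≠ 0 := fun h0 => hc'ne (by rw [h0, map_zero])
      have hlb := hminlb c₁ hc₁C hc₁ne
      rw [hTapp]
      by_cases hψ0 : ψ c₁ = 0
      · rw [hψ0, wt_snoc_zero]; omega
      · rw [wt_snoc_ne _ hψ0]; omega
  · push_neg at hex
    refine ⟨C', d₀ + 1, hrank', hLCD',
      ⟨⟨T c₀, (hmemC' _).mpr ⟨c₀, hc₀C, rfl⟩, ?_, ?_⟩, ?_⟩, hdd', Or.inr rfl⟩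
    · intro h0
      exact hc₀ne (hTinj (by rw [h0, map_zero]))
    · have hψne : ψ c₀ ≠ 0 := hex c₀ hc₀C hc₀ne hc₀wt
      rw [hTapp, wt_snoc_ne _ hψne, hc₀wt]
    · intro c' hc' hc'ne
      obtain ⟨c₁, hc₁C, rfl⟩ := (hmemC' c').mp hc'
      have hc₁ne : c₁ ≠ 0 := fun h0 => hc'ne (by rw [h0, map_zero])
      have hlb := hminlb c₁ hc₁C hc₁ne
      rw [hTapp]
      by_cases hw : wt c₁ = d₀
      · rw [wt_snoc_ne _ (hex c₁ hc₁C hc₁ne hw)]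
        omega
      · by_cases hψ0 : ψ c₁ = 0
        · rw [hψ0, wt_snoc_zero]; omega
        · rw [wt_snoc_ne _ hψ0]; omega
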